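/- Let K = ℚ(√D) with D > 1 squarefree, and δ as above. Let α be a totally positive integer of K with N(α) ≤ δ such that no rational integer n ≥ 2 divides α in O_K. Then α cannot be written as a + b with a, b ∈ O_K both totally positive. -/

import Mathlib

/-- Two parallel integer vectors have a common direction vector. -/
lemma parallel_int (m₁ n₁ m₂ n₂ : ℤ) (h : n₁ * m₂ = m₁ * n₂) :
    ∃ a b p q : ℤ, m₁ = p * a ∧ n₁ = p * b ∧ m₂ = q * a ∧ n₂ = q * b := by
  rcases eq_or_ne m₁ 0 with hm1 | hm1
  · rcases eq_or_ne n₁ 0 with hn1 | hn1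
    · exact ⟨m₂, n₂, 0, 1, by simp [hm1], by simp [hn1], by ring, by ring⟩
    · have hm2 : m₂ = 0 := by
        have := h
        rw [hm1] at this
        simpa [hn1] using this
      exact ⟨0, 1, n₁, n₂, by simp [hm1], by ring, by simp [hm2], by ring⟩
  · set g : ℤ := (Int.gcd m₁ n₁ : ℤ) with hg
    have hgpos : 0 < Int.gcd m₁ n₁ := Int.gcd_pos_of_ne_zero_left n₁ hm1
    have hgne : g ≠ 0 := by rw [hg]; exact_mod_cast hgpos.ne'
    obtain ⟨a, ha⟩ : g ∣ m₁ := Int.gcd_dvd_left m₁ n₁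
    obtain ⟨b, hb⟩ : g ∣ n₁ := Int.gcd_dvd_right m₁ n₁
    have hane : a ≠ 0 := by
      rintro rfl; exact hm1 (by simpa using ha)
    have hcop : IsCoprime a b := by
      rw [Int.isCoprime_iff_gcd_eq_one]
      have := Int.gcd_div_gcd_div_gcd hgpos
      have ha' : m₁ / g = a := by rw [ha]; exact Int.mul_ediv_cancel_left a hgne
      have hb' : n₁ / g = b := by rw [hb]; exact Int.mul_ediv_cancel_left b hgne
      rwa [ha', hb'] at this
    have hkey : b * m₂ = a * n₂ := by
      have : g * (b * m₂) = g * (a * n₂) := by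
        calc g * (b * m₂) = n₁ * m₂ := by rw [hb]; ring
        _ = m₁ * n₂ := h
        _ = g * (a * n₂) := by rw [ha]; ring
      exact mul_left_cancel₀ hgne this
    have hadvd : a ∣ m₂ := by
      have : a ∣ b * m₂ := ⟨n₂, hkey.symm ▸ rfl⟩
      exact hcop.dvd_of_dvd_mul_right (by rwa [mul_comm] at this)
    obtain ⟨q, hq⟩ := hadvd
    have hn2 : n₂ = q * b := by
      have : a * n₂ = a * (q * b) := by
        rw [← hkey, hq]; ring
      exact mul_left_cancel₀ hane this
    exact ⟨a, b, g, q, by rw [ha], by rw [hb], by rw [hq, mul_comm], hn2⟩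

/-- If `α = m + n·ω ∈ O_K` is totally positive, `N(α) ≤ δ`, and no rational integer
`≥ 2` divides `α` in `O_K`, then `α` is not a sum of two totally positive integers. -/
theorem stmt2 (D : ℕ) (hD : Squarefree D) (hD1 : 1 < D) (ω ω' δ : ℝ)
    (hω : ω = if D % 4 = 1 then (1 + Real.sqrt D) / 2 else Real.sqrt D)
    (hω' : ω' = if D % 4 = 1 then (1 - Real.sqrt D) / 2 else -Real.sqrt D)
    (hδ : δ = if D % 4 = 1 then Real.sqrt D else 2 * Real.sqrt D)
    (m n : ℤ)
    (hpos : 0 < (m : ℝ) + (n : ℝ) * ω) (hpos' : 0 < (m : ℝ) + (n : ℝ) * ω')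
    (hnorm : ((m : ℝ) + (n : ℝ) * ω) * ((m : ℝ) + (n : ℝ) * ω') ≤ δ)
    (hdvd : ∀ z : ℤ, 2 ≤ z → ¬(z ∣ m ∧ z ∣ n)) :
    ¬ ∃ m₁ n₁ m₂ n₂ : ℤ,
      (m : ℝ) + (n : ℝ) * ω = ((m₁ : ℝ) + (n₁ : ℝ) * ω) + ((m₂ : ℝ) + (n₂ : ℝ) * ω) ∧
      0 < (m₁ : ℝ) + (n₁ : ℝ) * ω ∧ 0 < (m₁ : ℝ) + (n₁ : ℝ) * ω' ∧
      0 < (m₂ : ℝ) + (n₂ : ℝ) * ω ∧ 0 < (m₂ : ℝ) + (n₂ : ℝ) * ω' := by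
  rintro ⟨m₁, n₁, m₂, n₂, heq, hb, hb', hc, hc'⟩
  -- irrationality of √D
  have hnsq : ¬ IsSquare D := by
    rintro ⟨k, hk⟩
    have : IsUnit k := hD k (by rw [hk])
    rw [Nat.isUnit_iff] at this
    subst this
    simp at hk
    omega
  have hirrD : Irrational (Real.sqrt D) := irrational_sqrt_natCast_iff.mpr hnsq
  have hirrω : Irrational ω := by
    rw [hω]; split_ifs
    · have h1 : Irrational ((1 : ℚ) + Real.sqrt D) := hirrD.ratCast_add 1
      have h2 : Irrational (((1 : ℚ) + Real.sqrt D) / (2 : ℕ)) := h1.div_natCast (by norm_num)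
      simpa using h2
    · exact hirrD
  have hsqpos : 0 < Real.sqrt D := Real.sqrt_pos.2 (by positivity)
  have hδpos : 0 < δ := by rw [hδ]; split_ifs <;> linarith
  have hδeq : ω - ω' = δ := by
    rw [hω, hω', hδ]; split_ifs <;> ring
  -- coordinates add up
  have hn : n = n₁ + n₂ := by
    by_contra hne
    have hz : ((n - n₁ - n₂ : ℤ) : ℝ) ≠ 0 := by
      rw [Int.cast_ne_zero]; omega
    set qq : ℚ := ((m₁ + m₂ - m : ℤ) : ℚ) / ((n - n₁ - n₂ : ℤ) : ℚ) with hqq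
    have : ω = (qq : ℝ) := by
      rw [hqq]
      push_cast
      rw [eq_div_iff (by push_cast at hz ⊢; exact hz)]
      push_cast at heq ⊢
      linear_combination (((n : ℝ) - n₁ - n₂)) * heq - ((n:ℝ) - n₁ - n₂) * heq + heq - heq + (heq)
    exact hirrω ⟨qq, this.symm⟩
  have hm : m = m₁ + m₂ := by
    have : (m : ℝ) = ((m₁ + m₂ : ℤ) : ℝ) := by
      push_cast
      have hn' : (n : ℝ) = (n₁ : ℝ) + n₂ := by exact_mod_cast congrArg (Int.cast : ℤ → ℝ) hn
      linear_combination heq - ω * hn'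
    exact_mod_cast this
  set B := (m₁ : ℝ) + (n₁ : ℝ) * ω with hB
  set B' := (m₁ : ℝ) + (n₁ : ℝ) * ω' with hB'
  set C := (m₂ : ℝ) + (n₂ : ℝ) * ω with hC
  set C' := (m₂ : ℝ) + (n₂ : ℝ) * ω' with hC'
  have hnorm' : (B + C) * (B' + C') ≤ δ := by
    have e1 : (m : ℝ) + (n : ℝ) * ω = B + C := by rw [hB, hC]; push_cast [hm, hn]; ring
    have e2 : (m : ℝ) + (n : ℝ) * ω' = B' + C' := by rw [hB', hC']; push_cast [hm, hn]; ring
    rwa [e1, e2] at hnorm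
  set d : ℤ := n₁ * m₂ - m₁ * n₂ with hd
  rcases eq_or_ne d 0 with hd0 | hd0
  · -- parallel case
    have hpar : n₁ * m₂ = m₁ * n₂ := by omega
    obtain ⟨a, b, p, q, e1, e2, e3, e4⟩ := parallel_int m₁ n₁ m₂ n₂ hpar
    have hBr : B = (p : ℝ) * ((a : ℝ) + (b : ℝ) * ω) := by rw [hB, e1, e2]; push_cast; ring
    have hCr : C = (q : ℝ) * ((a : ℝ) + (b : ℝ) * ω) := by rw [hC, e3, e4]; push_cast; ring
    set t : ℝ := (a : ℝ) + (b : ℝ) * ω with ht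
    rcases lt_trichotomy t 0 with htneg | htzero | htpos
    · have hp : p < 0 := by
        by_contra hp
        push_neg at hp
        have h0 : (0 : ℝ) ≤ p := by exact_mod_cast hp
        have := mul_nonpos_of_nonneg_of_nonpos h0 htneg.le
        rw [← hBr] at this
        linarith [hb]
      have hq : q < 0 := by
        by_contra hq
        push_neg at hq
        have h0 : (0 : ℝ) ≤ q := by exact_mod_cast hq
        have := mul_nonpos_of_nonneg_of_nonpos h0 htneg.le
        rw [← hCr] at this
        linarith [hc]
      exact hdvd (-(p + q)) (by omega)
        ⟨⟨-a, by rw [hm, e1, e3]; ring⟩, ⟨-b, by rw [hn, e2, e4]; ring⟩⟩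
    · rw [hBr, htzero, mul_zero] at hb; exact lt_irrefl 0 hb
    · have hp : 0 < p := by
        by_contra hp
        push_neg at hp
        have h0 : (p : ℝ) ≤ 0 := by exact_mod_cast hp
        have := mul_nonpos_of_nonpos_of_nonneg h0 htpos.le
        rw [← hBr] at this
        linarith [hb]
      have hq : 0 < q := by
        by_contra hq
        push_neg at hq
        have h0 : (q : ℝ) ≤ 0 := by exact_mod_cast hq
        have := mul_nonpos_of_nonpos_of_nonneg h0 htpos.le
        rw [← hCr] at this
        linarith [hc]
      exact hdvd (p + q) (by omega)
        ⟨⟨a, by rw [hm, e1, e3]; ring⟩, ⟨b, by rw [hn, e2, e4]; ring⟩⟩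
  · -- nondegenerate case
    have hkey : B * C' - B' * C = (d : ℝ) * δ := by
      rw [← hδeq, hB, hB', hC, hC', hd]; push_cast; ring
    have hd1 : (1 : ℝ) ≤ |(d : ℝ)| := by
      have := Int.one_le_abs (by exact hd0 : d ≠ 0)
      calc (1 : ℝ) ≤ ((|d| : ℤ) : ℝ) := by exact_mod_cast this
        _ = |(d : ℝ)| := by push_cast; ring
    have habs : |(d : ℝ)| * δ = |B * C' - B' * C| := by
      rw [hkey, abs_mul, abs_of_pos hδpos]
    have h1 : 0 < B * C' := mul_pos hb hc'
    have h2 : 0 < B' * C := mul_pos hb' hc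
    have h3 : 0 < B * B' := mul_pos hb hb'
    have h4 : 0 < C * C' := mul_pos hc hc'
    have h5 : |B * C' - B' * C| ≤ B * C' + B' * C := by
      rw [abs_le]; constructor <;> linarith
    have h6 : δ ≤ |(d : ℝ)| * δ := le_mul_of_one_le_left hδpos.le hd1
    have hexp : (B + C) * (B' + C') = B * B' + B * C' + B' * C + C * C' := by ring
    linarith [hnorm', h1, h2, h3, h4, h5, h6, habs.le, habs.ge]
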